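/- (Chain rule) Let F be a σ(X)-measurable random variable and let f: ℝ → ℝ be thrice differentiable with bounded third derivative. Then for every k ∈ ℕ, P-almost surely: | D_k f(F) − f′(F) D_kF + (1/2)( f″(F_k^+) + f″(F_k^-) ) (D_kF)² X_k | ≤ (10/3) · ‖f‴‖_∞ · |D_kF|³. -/

import Mathlib

open MeasureTheory ProbabilityTheory Filter
open scoped ENNReal NNReal

noncomputable section
/-- The Rademacher law `½(δ₁ + δ₋₁)`. -/
def radLaw : Measure ℝ := (2⁻¹ : ℝ≥0∞) • (Measure.dirac (1 : ℝ) + Measure.dirac (-1))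

/-- `X` is an i.i.d. Rademacher sequence on `(Ω, P)`. -/
structure IsRademacher {Ω : Type*} [MeasurableSpace Ω] (P : Measure Ω)
    (X : ℕ → Ω → ℝ) : Prop where
  meas : ∀ i, Measurable (X i)
  indep : iIndepFun X P
  law : ∀ i, P.map (X i) = radLaw

/-- The σ(X)-measurable random variable `F = φ(X)`. -/
def valF {Ω : Type*} (X : ℕ → Ω → ℝ) (φ : (ℕ → ℝ) → ℝ) (ω : Ω) : ℝ :=
  φ (fun n => X n ω)

/-- `F_k^+`: `F` evaluated on the sequence whose `k`-th coordinate is set to `+1`. -/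
def valFplus {Ω : Type*} (X : ℕ → Ω → ℝ) (φ : (ℕ → ℝ) → ℝ) (k : ℕ) (ω : Ω) : ℝ :=
  φ (Function.update (fun n => X n ω) k 1)

/-- `F_k^-`: `F` evaluated on the sequence whose `k`-th coordinate is set to `-1`. -/
def valFminus {Ω : Type*} (X : ℕ → Ω → ℝ) (φ : (ℕ → ℝ) → ℝ) (k : ℕ) (ω : Ω) : ℝ :=
  φ (Function.update (fun n => X n ω) k (-1))

/-- The discrete gradient `D_k F = (F_k^+ - F_k^-) / 2`. -/
def gradD {Ω : Type*} (X : ℕ → Ω → ℝ) (φ : (ℕ → ℝ) → ℝ) (k : ℕ) (ω : Ω) : ℝ :=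
  (valFplus X φ k ω - valFminus X φ k ω) / 2

/-- Second-order Taylor bound with Lagrange-type remainder estimate. -/
lemma taylor2 {f : ℝ → ℝ} (hf1 : Differentiable ℝ f) (hf2 : Differentiable ℝ (deriv f))
    (hf3 : Differentiable ℝ (deriv (deriv f)))
    {C : ℝ} (hC : ∀ x, |deriv (deriv (deriv f)) x| ≤ C) (x y : ℝ) :
    |f y - f x - deriv f x * (y - x) - deriv (deriv f) x * (y - x) ^ 2 / 2|
      ≤ C / 2 * |y - x| ^ 3 := by
  set g : ℝ → ℝ := fun t =>
    f y - (f t + deriv f t * (y - t) + deriv (deriv f) t * (y - t) ^ 2 / 2) with hg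
  have hder : ∀ t, HasDerivAt g (-(deriv (deriv (deriv f)) t * (y - t) ^ 2 / 2)) t := by
    intro t
    have h1 : HasDerivAt f (deriv f t) t := (hf1 t).hasDerivAt
    have h2 : HasDerivAt (deriv f) (deriv (deriv f) t) t := (hf2 t).hasDerivAt
    have h3 : HasDerivAt (deriv (deriv f)) (deriv (deriv (deriv f)) t) t := (hf3 t).hasDerivAt
    have hy : HasDerivAt (fun s : ℝ => y - s) (-1) t := (hasDerivAt_id t).const_sub y
    have hy2 : HasDerivAt (fun s : ℝ => (y - s) ^ 2) (2 * (y - t) ^ 1 * (-1)) t := hy.pow 2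
    have hA := (((h1.add (h2.mul hy)).add ((h3.mul hy2).div_const 2))).const_sub (f y)
    refine hA.congr_deriv ?_
    ring
  have hb : ∀ t ∈ Set.uIcc x y,
      ‖-(deriv (deriv (deriv f)) t * (y - t) ^ 2 / 2)‖ ≤ C / 2 * (y - x) ^ 2 := by
    intro t ht
    have h1 : (y - t) ^ 2 ≤ (y - x) ^ 2 := by
      rcases Set.mem_uIcc.1 ht with ⟨ha, hb⟩ | ⟨ha, hb⟩ <;> nlinarith
    have h2 := hC t
    have h3 : (0:ℝ) ≤ |deriv (deriv (deriv f)) t| := abs_nonneg _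
    rw [Real.norm_eq_abs, abs_neg, abs_div, abs_mul, abs_two]
    rw [abs_of_nonneg (sq_nonneg (y - t))]
    have : |deriv (deriv (deriv f)) t| * (y - t) ^ 2 ≤ C * (y - x) ^ 2 := by nlinarith
    linarith
  have key := Convex.norm_image_sub_le_of_norm_hasDerivWithin_le
    (f := g) (f' := fun t => -(deriv (deriv (deriv f)) t * (y - t) ^ 2 / 2))
    (fun t _ => (hder t).hasDerivWithinAt) hb (convex_uIcc x y)
    (Set.left_mem_uIcc) (Set.right_mem_uIcc)
  have hgy : g y = 0 := by simp [hg]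
  have hgx : g x = f y - f x - deriv f x * (y - x) - deriv (deriv f) x * (y - x) ^ 2 / 2 := by
    simp only [hg]; ring
  rw [hgy, hgx, zero_sub] at key
  simp only [Real.norm_eq_abs, abs_neg] at key
  calc |f y - f x - deriv f x * (y - x) - deriv (deriv f) x * (y - x) ^ 2 / 2|
      ≤ C / 2 * (y - x) ^ 2 * |y - x| := key
    _ = C / 2 * |y - x| ^ 3 := by
        rw [← sq_abs (y - x)]; ring

/-- The second derivative is `C`-Lipschitz when the third derivative is bounded by `C`. -/
lemma lip2 {f : ℝ → ℝ} (hf3 : Differentiable ℝ (deriv (deriv f)))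
    {C : ℝ} (hC : ∀ x, |deriv (deriv (deriv f)) x| ≤ C) (u v : ℝ) :
    |deriv (deriv f) u - deriv (deriv f) v| ≤ C * |u - v| := by
  have := Convex.norm_image_sub_le_of_norm_hasDerivWithin_le
    (f := deriv (deriv f)) (f' := deriv (deriv (deriv f))) (s := Set.univ)
    (fun t _ => (hf3 t).hasDerivAt.hasDerivWithinAt)
    (fun t _ => by simpa [Real.norm_eq_abs] using hC t) convex_univ
    (Set.mem_univ v) (Set.mem_univ u)
  simpa [Real.norm_eq_abs] using this

/-- The deterministic core estimate behind the chain rule. -/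
lemma chain_core {f : ℝ → ℝ} (hf1 : Differentiable ℝ f) (hf2 : Differentiable ℝ (deriv f))
    (hf3 : Differentiable ℝ (deriv (deriv f)))
    {C : ℝ} (hC : ∀ x, |deriv (deriv (deriv f)) x| ≤ C) (u v : ℝ) :
    |(f v - f u) / 2 - deriv f u * ((v - u) / 2)
        - (1 / 2) * (deriv (deriv f) u + deriv (deriv f) v) * ((v - u) / 2) ^ 2|
      ≤ 3 * C * |(v - u) / 2| ^ 3 := by
  have hC0 : 0 ≤ C := le_trans (abs_nonneg _) (hC 0)
  set T := f v - f u - deriv f u * (v - u) - deriv (deriv f) u * (v - u) ^ 2 / 2 with hT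
  set B := deriv (deriv f) u - deriv (deriv f) v with hB
  set D := (v - u) / 2 with hD
  have hTb : |T| ≤ 4 * C * |D| ^ 3 := by
    have h := taylor2 hf1 hf2 hf3 hC u v
    have hvu : |v - u| = 2 * |D| := by
      rw [hD, abs_div, abs_two]; ring
    rw [hvu] at h
    calc |T| ≤ C / 2 * (2 * |D|) ^ 3 := h
      _ = 4 * C * |D| ^ 3 := by ring
  have hBb : |B| ≤ 2 * C * |D| := by
    have h := lip2 hf3 hC u v
    have hvu : |u - v| = 2 * |D| := by
      rw [hD, show u - v = -(v - u) by ring, abs_neg, abs_div, abs_two]; ring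
    rw [hvu] at h
    linarith
  have heq : (f v - f u) / 2 - deriv f u * D
      - (1 / 2) * (deriv (deriv f) u + deriv (deriv f) v) * D ^ 2
      = T / 2 + (B / 2) * D ^ 2 := by
    rw [hT, hB, hD]; ring
  rw [heq]
  have h1 : |T / 2 + (B / 2) * D ^ 2| ≤ |T| / 2 + |B| / 2 * D ^ 2 := by
    have ha := abs_add_le (T / 2) ((B / 2) * D ^ 2)
    have e1 : |T / 2| = |T| / 2 := by rw [abs_div, abs_two]
    have e2 : |(B / 2) * D ^ 2| = |B| / 2 * D ^ 2 := by
      rw [abs_mul, abs_div, abs_two, abs_of_nonneg (sq_nonneg D)]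
    rw [e1, e2] at ha; exact ha
  have hsq : D ^ 2 = |D| ^ 2 := (sq_abs D).symm
  have hd0 : (0:ℝ) ≤ |D| := abs_nonneg D
  have hB0 : (0:ℝ) ≤ |B| := abs_nonneg B
  nlinarith [mul_le_mul_of_nonneg_right hBb (sq_nonneg D)]

/-- **Chain rule.** For a σ(X)-measurable `F = φ(X)` and `f : ℝ → ℝ`
thrice differentiable with third derivative bounded by `C`, almost surely
`|D_k f(F) - f'(F) D_k F + ½ (f''(F_k^+) + f''(F_k^-)) (D_k F)² X_k|
  ≤ (10/3) C |D_k F|³`. -/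
theorem stmt6 {Ω : Type*} [MeasurableSpace Ω] (P : Measure Ω)
    [IsProbabilityMeasure P] (X : ℕ → Ω → ℝ) (hX : IsRademacher P X)
    (φ : (ℕ → ℝ) → ℝ) (hφ : Measurable φ)
    (f : ℝ → ℝ) (hf1 : Differentiable ℝ f) (hf2 : Differentiable ℝ (deriv f))
    (hf3 : Differentiable ℝ (deriv (deriv f)))
    (C : ℝ) (hC : ∀ x, |deriv (deriv (deriv f)) x| ≤ C) (k : ℕ) :
    ∀ᵐ ω ∂P,
      |(f (valFplus X φ k ω) - f (valFminus X φ k ω)) / 2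
          - deriv f (valF X φ ω) * gradD X φ k ω
          + (1 / 2) * (deriv (deriv f) (valFplus X φ k ω)
              + deriv (deriv f) (valFminus X φ k ω)) * (gradD X φ k ω) ^ 2 * X k ω|
        ≤ (10 / 3) * C * |gradD X φ k ω| ^ 3 := by
  have hC0 : 0 ≤ C := le_trans (abs_nonneg _) (hC 0)
  have hae : ∀ᵐ ω ∂P, X k ω = 1 ∨ X k ω = -1 := by
    have hs : MeasurableSet {x : ℝ | x = 1 ∨ x = -1} := by
      have : {x : ℝ | x = 1 ∨ x = -1} = {1, -1} := by ext z; simp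
      rw [this]
      exact ((Set.finite_singleton _).insert _).measurableSet
    rw [ae_iff]
    have he : {ω | ¬(X k ω = 1 ∨ X k ω = -1)} = X k ⁻¹' {x : ℝ | x = 1 ∨ x = -1}ᶜ := rfl
    rw [he, ← Measure.map_apply (hX.meas k) hs.compl, hX.law k]
    rw [radLaw]
    simp [Measure.dirac_apply' _ hs.compl, Set.indicator_apply]
  filter_upwards [hae] with ω hω
  set Fp := valFplus X φ k ω with hFp
  set Fm := valFminus X φ k ω with hFm
  rcases hω with h1 | h1
  · -- X k ω = 1, so F = F⁺
    have hF : valF X φ ω = Fp := by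
      rw [hFp]
      unfold valF valFplus
      congr 1
      rw [← h1]
      exact (Function.update_eq_self k (fun n => X n ω)).symm
    rw [hF, h1]
    have h := chain_core hf1 hf2 hf3 hC Fp Fm
    have e1 : (f Fp - f Fm) / 2 - deriv f Fp * gradD X φ k ω
        + 1 / 2 * (deriv (deriv f) Fp + deriv (deriv f) Fm) * gradD X φ k ω ^ 2 * 1
        = -((f Fm - f Fp) / 2 - deriv f Fp * ((Fm - Fp) / 2)
            - (1 / 2) * (deriv (deriv f) Fp + deriv (deriv f) Fm) * ((Fm - Fp) / 2) ^ 2) := by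
      simp only [gradD, hFp, hFm]; ring
    rw [e1, abs_neg]
    have e2 : |(Fm - Fp) / 2| = |gradD X φ k ω| := by
      simp only [gradD, hFp, hFm]
      rw [show (valFminus X φ k ω - valFplus X φ k ω) / 2
          = -((valFplus X φ k ω - valFminus X φ k ω) / 2) by ring, abs_neg]
    calc |(f Fm - f Fp) / 2 - deriv f Fp * ((Fm - Fp) / 2)
            - (1 / 2) * (deriv (deriv f) Fp + deriv (deriv f) Fm) * ((Fm - Fp) / 2) ^ 2|
        ≤ 3 * C * |(Fm - Fp) / 2| ^ 3 := h
      _ = 3 * C * |gradD X φ k ω| ^ 3 := by rw [e2]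
      _ ≤ 10 / 3 * C * |gradD X φ k ω| ^ 3 := by
          nlinarith [pow_nonneg (abs_nonneg (gradD X φ k ω)) 3]
  · -- X k ω = -1, so F = F⁻
    have hF : valF X φ ω = Fm := by
      rw [hFm]
      unfold valF valFminus
      congr 1
      rw [← h1]
      exact (Function.update_eq_self k (fun n => X n ω)).symm
    rw [hF, h1]
    have h := chain_core hf1 hf2 hf3 hC Fm Fp
    have e1 : (f Fp - f Fm) / 2 - deriv f Fm * gradD X φ k ω
        + 1 / 2 * (deriv (deriv f) Fp + deriv (deriv f) Fm) * gradD X φ k ω ^ 2 * (-1)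
        = (f Fp - f Fm) / 2 - deriv f Fm * ((Fp - Fm) / 2)
            - (1 / 2) * (deriv (deriv f) Fm + deriv (deriv f) Fp) * ((Fp - Fm) / 2) ^ 2 := by
      simp only [gradD, hFp, hFm]; ring
    rw [e1]
    have e2 : |(Fp - Fm) / 2| = |gradD X φ k ω| := by
      simp only [gradD, hFp, hFm]
    calc |(f Fp - f Fm) / 2 - deriv f Fm * ((Fp - Fm) / 2)
            - (1 / 2) * (deriv (deriv f) Fm + deriv (deriv f) Fp) * ((Fp - Fm) / 2) ^ 2|
        ≤ 3 * C * |(Fp - Fm) / 2| ^ 3 := h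
      _ = 3 * C * |gradD X φ k ω| ^ 3 := by rw [e2]
      _ ≤ 10 / 3 * C * |gradD X φ k ω| ^ 3 := by
          nlinarith [pow_nonneg (abs_nonneg (gradD X φ k ω)) 3]
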